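/- Let C be a Tor-∏-orthogonal left R-module and X : ⋯ → P₁ → P₀ → C₋₁ → C₋₂ → ⋯ an exact complex with all Pᵢ projective and all C_j ∈ Add_R(C), such that X ⊗-exactness holds with respect to Prod_R(C⁺) (i.e., Y ⊗_R X is exact for all Y ∈ Prod_R(C⁺)). Then every kernel K_j = Ker(C_j → C_{j-1}) is a projectively coresolved G_C-flat module. -/

import Mathlib

open CategoryTheory CategoryTheory.Limits CategoryTheory.MonoidalCategory
open scoped TensorProduct

set_option maxHeartbeats 1000000

set_option autoImplicit false

universe u

variable {R : Type u} [CommRing R]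

/-- A short exact sequence of `R`-modules encoded by two linear maps. -/
def IsSES {A B C : ModuleCat.{u} R} (f : A →ₗ[R] B) (g : B →ₗ[R] C) : Prop :=
  Function.Injective f ∧ Function.Exact f g ∧ Function.Surjective g

/-- `Add_R(C)`: direct summands of direct sums of copies of `C`. -/
def AddClass (C : ModuleCat.{u} R) : ModuleCat.{u} R → Prop := fun M =>
  ∃ (ι : Type u) (s : M →ₗ[R] (ι →₀ C)) (p : (ι →₀ C) →ₗ[R] M), p ∘ₗ s = LinearMap.id

/-- `Prod_R(C)`: direct summands of direct products of copies of `C`. -/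
def ProdClass (C : ModuleCat.{u} R) : ModuleCat.{u} R → Prop := fun M =>
  ∃ (ι : Type u) (s : M →ₗ[R] (ι → C)) (p : (ι → C) →ₗ[R] M), p ∘ₗ s = LinearMap.id

/-- The character module `C⁺ = Hom_ℤ(C, ℚ/ℤ)` as an `R`-module. -/
noncomputable def charM (C : ModuleCat.{u} R) : ModuleCat.{u} R :=
  ModuleCat.of R (CharacterModule C)

/-- `C` is Tor-∏-orthogonal: `Tor^R_i((C⁺)^I, C) = 0` for all `i ≥ 1` and all sets `I`. -/
def TorProdOrthogonal (C : ModuleCat.{u} R) : Prop :=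
  ∀ (I : Type u) (i : ℕ), 1 ≤ i →
    Limits.IsZero (((Tor (ModuleCat.{u} R) i).obj
      (ModuleCat.of R (I → CharacterModule C))).obj C)

/-- A totally acyclic complex `⋯ → P₁ → P₀ → A₀ → A₁ → ⋯` with the `Pᵢ` projective,
the `Aⱼ` in `Add_R(C)`, which stays exact after `Y ⊗_R -` for `Y ∈ Prod_R(C⁺)`. -/
structure PGCFComplex (C : ModuleCat.{u} R) where
  P : ℕ → ModuleCat.{u} R
  A : ℕ → ModuleCat.{u} R
  projP : ∀ n, Module.Projective R (P n)
  memA : ∀ n, AddClass C (A n)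
  dP : ∀ n, P (n + 1) →ₗ[R] P n
  mid : P 0 →ₗ[R] A 0
  dA : ∀ n, A n →ₗ[R] A (n + 1)
  exact_P : ∀ n, Function.Exact (dP (n + 1)) (dP n)
  exact_mid : Function.Exact (dP 0) mid
  exact_A0 : Function.Exact mid (dA 0)
  exact_A : ∀ n, Function.Exact (dA n) (dA (n + 1))
  tensor_exact : ∀ Y : ModuleCat.{u} R, ProdClass (charM C) Y →
    (∀ n, Function.Exact (LinearMap.lTensor Y (dP (n + 1))) (LinearMap.lTensor Y (dP n))) ∧
    Function.Exact (LinearMap.lTensor Y (dP 0)) (LinearMap.lTensor Y mid) ∧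
    Function.Exact (LinearMap.lTensor Y mid) (LinearMap.lTensor Y (dA 0)) ∧
    ∀ n, Function.Exact (LinearMap.lTensor Y (dA n)) (LinearMap.lTensor Y (dA (n + 1)))

/-- `M` is projectively coresolved `G_C`-flat. -/
def IsPGCF (C M : ModuleCat.{u} R) : Prop :=
  ∃ X : PGCFComplex C, Nonempty (M ≃ₗ[R] ↥(LinearMap.range X.mid))

namespace S10

lemma exact_equiv {A B C A' B' C' : Type u} [Zero C] [Zero C']
    (e1 : A' ≃ A) (e2 : B' ≃ B) (e3 : C' ≃ C)
    (f : A → B) (g : B → C) (f' : A' → B') (g' : B' → C')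
    (hf : ∀ x, e2 (f' x) = f (e1 x)) (hg : ∀ x, e3 (g' x) = g (e2 x))
    (h0 : e3 0 = 0) (h : Function.Exact f g) : Function.Exact f' g' := by
  intro y
  constructor
  · intro hy
    have hgy : g (e2 y) = 0 := by rw [← hg, hy, h0]
    obtain ⟨x, hx⟩ := (h (e2 y)).mp hgy
    refine ⟨e1.symm x, e2.injective ?_⟩
    rw [hf, Equiv.apply_symm_apply, hx]
  · rintro ⟨x, rfl⟩
    apply e3.injective
    rw [h0, hg, hf]
    exact h.apply_apply_eq_zero (e1 x)

lemma lift_surj {P M N : Type u} [AddCommGroup P] [Module R P] [AddCommGroup M] [Module R M]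
    [AddCommGroup N] [Module R N] (hP : Module.Projective R P)
    (t1 : M →ₗ[R] N) (ht1 : Function.Surjective t1) (g : P →ₗ[R] N) :
    ∃ h : P →ₗ[R] M, t1 ∘ₗ h = g := by
  haveI := hP
  exact Module.projective_lifting_property t1 g ht1

lemma lift_thru {P M N N' : Type u} [AddCommGroup P] [Module R P] [AddCommGroup M] [Module R M]
    [AddCommGroup N] [Module R N] [AddCommGroup N'] [Module R N']
    (hP : Module.Projective R P)
    (t1 : M →ₗ[R] N) (t2 : N →ₗ[R] N') (hex : Function.Exact t1 t2)
    (g : P →ₗ[R] N) (hg : ∀ x, t2 (g x) = 0) :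
    ∃ h : P →ₗ[R] M, t1 ∘ₗ h = g := by
  haveI := hP
  set N₀ := LinearMap.ker t2 with hN₀
  have hrange : ∀ x : M, t1 x ∈ N₀ := fun x => hex.apply_apply_eq_zero x
  set t1' : M →ₗ[R] N₀ := LinearMap.codRestrict N₀ t1 hrange with ht1'
  have hsurj : Function.Surjective t1' := by
    rintro ⟨y, hy⟩
    obtain ⟨x, hx⟩ := (hex y).mp hy
    exact ⟨x, Subtype.ext hx⟩
  set g' : P →ₗ[R] N₀ := LinearMap.codRestrict N₀ g (fun x => hg x) with hg'
  obtain ⟨h, hh⟩ := Module.projective_lifting_property t1' g' hsurj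
  refine ⟨h, LinearMap.ext fun x => ?_⟩
  have := congrArg (fun (u : P →ₗ[R] N₀) => ((u x : N₀) : N)) hh
  simp [ht1', hg'] at this
  exact this

/-- A concrete projective resolution of `N`. -/
structure CRes (N : ModuleCat.{u} R) : Type (u+1) where
  Q : ℕ → ModuleCat.{u} R
  proj : ∀ n, Module.Projective R (Q n)
  d : ∀ n, Q (n+1) →ₗ[R] Q n
  e : Q 0 →ₗ[R] N
  ex : ∀ n, Function.Exact (d (n+1)) (d n)
  ex0 : Function.Exact (d 0) e
  surj : Function.Surjective e

def CRes.IsNice (C : ModuleCat.{u} R) {N : ModuleCat.{u} R} (r : CRes N) : Prop :=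
  ∀ Y : ModuleCat.{u} R, ProdClass (charM C) Y →
    ∀ n, Function.Exact (LinearMap.lTensor Y (r.d (n+1))) (LinearMap.lTensor Y (r.d n))

lemma CRes.d_comp_d {N : ModuleCat.{u} R} (r : CRes N) (n : ℕ) : r.d n ∘ₗ r.d (n+1) = 0 :=
  LinearMap.ext fun x => (r.ex n).apply_apply_eq_zero x

lemma CRes.e_comp_d {N : ModuleCat.{u} R} (r : CRes N) : r.e ∘ₗ r.d 0 = 0 :=
  LinearMap.ext fun x => r.ex0.apply_apply_eq_zero x

section Lift

variable {N N' : ModuleCat.{u} R} (f : N →ₗ[R] N') (r : CRes N) (t : CRes N')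

private def LC : ∀ n, ((r.Q n : Type u) →ₗ[R] t.Q n) → Prop
  | 0 => fun u => t.e ∘ₗ u = f ∘ₗ r.e
  | _+1 => fun _ => True

private noncomputable def LA :
    ∀ n : ℕ, Σ' (u : (r.Q n : Type u) →ₗ[R] t.Q n) (v : (r.Q (n+1) : Type u) →ₗ[R] t.Q (n+1)),
      LC f r t n u ∧ t.d n ∘ₗ v = u ∘ₗ r.d n
  | 0 =>
    let c0 := lift_surj (r.proj 0) t.e t.surj (f ∘ₗ r.e)
    let u0 := c0.choose
    let c1 := lift_thru (r.proj 1) (t.d 0) t.e t.ex0 (u0 ∘ₗ r.d 0) (fun x => by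
      have h1 : t.e (u0 (r.d 0 x)) = f (r.e (r.d 0 x)) :=
        DFunLike.congr_fun c0.choose_spec (r.d 0 x)
      have h2 : r.e (r.d 0 x) = 0 := r.ex0.apply_apply_eq_zero x
      simpa [h2] using h1)
    ⟨u0, c1.choose, c0.choose_spec, c1.choose_spec⟩
  | (n+1) =>
    let p := LA n
    let c := lift_thru (r.proj (n+2)) (t.d (n+1)) (t.d n) (t.ex n) (p.2.1 ∘ₗ r.d (n+1)) (fun x => by
      have h1 : t.d n (p.2.1 (r.d (n+1) x)) = p.1 (r.d n (r.d (n+1) x)) :=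
        DFunLike.congr_fun p.2.2.2 (r.d (n+1) x)
      have h2 : r.d n (r.d (n+1) x) = 0 := (r.ex n).apply_apply_eq_zero x
      simpa [h2] using h1)
    ⟨p.2.1, c.choose, trivial, c.choose_spec⟩

private lemma LA_succ_fst (n : ℕ) : (LA f r t (n+1)).1 = (LA f r t n).2.1 := rfl

lemma CRes.lift :
    ∃ φ : ∀ n, ((r.Q n : Type u) →ₗ[R] t.Q n),
      (t.e ∘ₗ φ 0 = f ∘ₗ r.e) ∧ ∀ n, t.d n ∘ₗ φ (n+1) = φ n ∘ₗ r.d n := by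
  refine ⟨fun n => (LA f r t n).1, ?_, fun n => ?_⟩
  · exact (LA f r t 0).2.2.1
  · show t.d n ∘ₗ (LA f r t (n+1)).1 = (LA f r t n).1 ∘ₗ r.d n
    rw [LA_succ_fst]
    exact (LA f r t n).2.2.2

end Lift

section Homotopy

variable {N N' : ModuleCat.{u} R} (r : CRes N) (t : CRes N')
variable (γ : ∀ n, (r.Q n : Type u) →ₗ[R] t.Q n)
private noncomputable def HA (hcomm : ∀ n, t.d n ∘ₗ γ (n+1) = γ n ∘ₗ r.d n)
    (h0 : t.e ∘ₗ γ 0 = 0) :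
    ∀ n : ℕ, Σ' (a : (r.Q n : Type u) →ₗ[R] t.Q (n+1)) (b : (r.Q (n+1) : Type u) →ₗ[R] t.Q (n+2)),
      t.d (n+1) ∘ₗ b = γ (n+1) - a ∘ₗ r.d n
  | 0 =>
    let c0 := lift_thru (r.proj 0) (t.d 0) t.e t.ex0 (γ 0) (fun x =>
      DFunLike.congr_fun h0 x)
    let a0 := c0.choose
    let c1 := lift_thru (r.proj 1) (t.d 1) (t.d 0) (t.ex 0) (γ 1 - a0 ∘ₗ r.d 0) (fun x => by
      have h1 : t.d 0 (γ 1 x) = γ 0 (r.d 0 x) :=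
        DFunLike.congr_fun (hcomm 0) x
      have h2 : t.d 0 (a0 (r.d 0 x)) = γ 0 (r.d 0 x) :=
        DFunLike.congr_fun c0.choose_spec (r.d 0 x)
      simp [h1, h2])
    ⟨a0, c1.choose, c1.choose_spec⟩
  | (n+1) =>
    let p := HA hcomm h0 n
    let c := lift_thru (r.proj (n+2)) (t.d (n+2)) (t.d (n+1)) (t.ex (n+1))
      (γ (n+2) - p.2.1 ∘ₗ r.d (n+1)) (fun x => by
      have h1 : t.d (n+1) (γ (n+2) x) = γ (n+1) (r.d (n+1) x) :=
        DFunLike.congr_fun (hcomm (n+1)) x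
      have h2 : t.d (n+1) (p.2.1 (r.d (n+1) x)) =
          γ (n+1) (r.d (n+1) x) - p.1 (r.d n (r.d (n+1) x)) :=
        DFunLike.congr_fun p.2.2 (r.d (n+1) x)
      have h3 : r.d n (r.d (n+1) x) = 0 := (r.ex n).apply_apply_eq_zero x
      simp [h1, h2, h3])
    ⟨p.2.1, c.choose, c.choose_spec⟩

private lemma HA_succ_fst (hcomm : ∀ n, t.d n ∘ₗ γ (n+1) = γ n ∘ₗ r.d n)
    (h0 : t.e ∘ₗ γ 0 = 0) (n : ℕ) :
    (HA r t γ hcomm h0 (n+1)).1 = (HA r t γ hcomm h0 n).2.1 := rfl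

lemma CRes.nullHomotopy (hcomm : ∀ n, t.d n ∘ₗ γ (n+1) = γ n ∘ₗ r.d n)
    (h0 : t.e ∘ₗ γ 0 = 0) :
    ∃ h : ∀ n, ((r.Q n : Type u) →ₗ[R] t.Q (n+1)),
      ∀ n, γ (n+1) = t.d (n+1) ∘ₗ h (n+1) + h n ∘ₗ r.d n := by
  refine ⟨fun n => (HA r t γ hcomm h0 n).1, fun n => ?_⟩
  show γ (n+1) = t.d (n+1) ∘ₗ (HA r t γ hcomm h0 (n+1)).1 + (HA r t γ hcomm h0 n).1 ∘ₗ r.d n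
  rw [HA_succ_fst, (HA r t γ hcomm h0 n).2.2]
  abel

end Homotopy

lemma nice_of_retract (C : ModuleCat.{u} R) {N M : ModuleCat.{u} R} (r : CRes N) (q : CRes M)
    (hq : q.IsNice C) (s : N →ₗ[R] M) (p : M →ₗ[R] N) (hps : p ∘ₗ s = LinearMap.id) :
    r.IsNice C := by
  obtain ⟨φ, hφ0, hφ⟩ := CRes.lift s r q
  obtain ⟨ψ, hψ0, hψ⟩ := CRes.lift p q r
  set γ : ∀ n, (r.Q n : Type u) →ₗ[R] r.Q n := fun n => ψ n ∘ₗ φ n - LinearMap.id with hγ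
  have hγcomm : ∀ n, r.d n ∘ₗ γ (n+1) = γ n ∘ₗ r.d n := by
    intro n
    simp only [hγ, LinearMap.comp_sub, LinearMap.sub_comp, LinearMap.comp_id, LinearMap.id_comp]
    congr 1
    rw [← LinearMap.comp_assoc, hψ n, LinearMap.comp_assoc, hφ n, ← LinearMap.comp_assoc]
  have hγ0 : r.e ∘ₗ γ 0 = 0 := by
    simp only [hγ, LinearMap.comp_sub, LinearMap.comp_id]
    rw [← LinearMap.comp_assoc, hψ0, LinearMap.comp_assoc, hφ0, ← LinearMap.comp_assoc, hps,
      LinearMap.id_comp, sub_self]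
  obtain ⟨h, hh⟩ := CRes.nullHomotopy r r γ hγcomm hγ0
  intro Y hY n
  have hqn := hq Y hY
  intro z
  constructor
  · intro hz
    have hw : LinearMap.lTensor Y (q.d n) (LinearMap.lTensor Y (φ (n+1)) z) = 0 := by
      rw [← LinearMap.comp_apply, ← LinearMap.lTensor_comp, hφ n, LinearMap.lTensor_comp,
        LinearMap.comp_apply, hz, map_zero]
    obtain ⟨u, hu⟩ := (hqn n _).mp hw
    have key : z = LinearMap.lTensor Y (r.d (n+1))
        (LinearMap.lTensor Y (ψ (n+2)) u - LinearMap.lTensor Y (h (n+1)) z) := by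
      have e1 : LinearMap.lTensor Y (ψ (n+1)) (LinearMap.lTensor Y (φ (n+1)) z)
          = z + LinearMap.lTensor Y (γ (n+1)) z := by
        rw [← LinearMap.comp_apply, ← LinearMap.lTensor_comp]
        have : ψ (n+1) ∘ₗ φ (n+1) = LinearMap.id + γ (n+1) := by
          simp [hγ]
        rw [this]
        simp [LinearMap.lTensor_add]
      have e2 : LinearMap.lTensor Y (ψ (n+1)) (LinearMap.lTensor Y (φ (n+1)) z)
          = LinearMap.lTensor Y (r.d (n+1)) (LinearMap.lTensor Y (ψ (n+2)) u) := by
        rw [← hu, ← LinearMap.comp_apply, ← LinearMap.lTensor_comp, ← hψ (n+1), LinearMap.lTensor_comp, LinearMap.comp_apply]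
      have e3 : LinearMap.lTensor Y (γ (n+1)) z
          = LinearMap.lTensor Y (r.d (n+1)) (LinearMap.lTensor Y (h (n+1)) z) := by
        rw [hh n]
        simp only [LinearMap.lTensor_add, LinearMap.lTensor_comp, LinearMap.add_apply,
          LinearMap.comp_apply]
        rw [hz, map_zero, add_zero]
      rw [map_sub, ← e2, e1, e3]
      abel
    exact ⟨_, key.symm⟩
  · rintro ⟨x, rfl⟩
    rw [← LinearMap.comp_apply, ← LinearMap.lTensor_comp, r.d_comp_d, LinearMap.lTensor_zero]
    rfl


/-! ### Free resolutions -/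

section FreeRes

lemma exact_subtype_comp {M1 M2 M3 : Type u} [AddCommGroup M1] [Module R M1] [AddCommGroup M2]
    [Module R M2] [AddCommGroup M3] [Module R M3]
    (f : M2 →ₗ[R] M3) (g : M1 →ₗ[R] LinearMap.ker f) (hg : Function.Surjective g) :
    Function.Exact ((LinearMap.ker f).subtype ∘ₗ g) f := by
  intro y
  constructor
  · intro hy
    obtain ⟨z, hz⟩ := hg ⟨y, hy⟩
    exact ⟨z, by rw [LinearMap.comp_apply, hz]; rfl⟩
  · rintro ⟨z, rfl⟩
    exact (g z).2

lemma exact_subtype_comp₂ {M1 M2 M3 M4 : Type u} [AddCommGroup M1] [Module R M1] [AddCommGroup M2]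
    [Module R M2] [AddCommGroup M3] [Module R M3] [AddCommGroup M4] [Module R M4]
    (f : M2 →ₗ[R] M3) (ι : M3 →ₗ[R] M4) (hι : Function.Injective ι)
    (g : M1 →ₗ[R] LinearMap.ker f) (hg : Function.Surjective g) :
    Function.Exact ((LinearMap.ker f).subtype ∘ₗ g) (ι ∘ₗ f) := by
  intro y
  constructor
  · intro hy
    have hy' : f y = 0 := by
      apply hι
      simpa using hy
    obtain ⟨z, hz⟩ := hg ⟨y, hy'⟩
    exact ⟨z, by rw [LinearMap.comp_apply, hz]; rfl⟩
  · rintro ⟨z, rfl⟩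
    show ι (f ((g z : LinearMap.ker f) : M2)) = 0
    rw [LinearMap.mem_ker.mp (g z).2, map_zero]

private noncomputable def fmod (M : ModuleCat.{u} R) : ModuleCat.{u} R :=
  ModuleCat.of R ((M : Type u) →₀ R)

private noncomputable def fep (M : ModuleCat.{u} R) : (fmod M : Type u) →ₗ[R] M :=
  Finsupp.linearCombination R _root_.id

private lemma fep_surj (M : ModuleCat.{u} R) : Function.Surjective (fep M) :=
  Finsupp.linearCombination_surjective R Function.surjective_id

private noncomputable def KK (N : ModuleCat.{u} R) : ℕ → ModuleCat.{u} R := fun n =>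
  Nat.rec N (fun _ M => ModuleCat.of R (LinearMap.ker (fep M))) n

noncomputable def freeRes (N : ModuleCat.{u} R) : CRes N where
  Q := fun n => fmod (KK N n)
  proj := fun n => inferInstanceAs (Module.Projective R ((KK N n : Type u) →₀ R))
  d := fun n => (LinearMap.ker (fep (KK N n))).subtype ∘ₗ fep (KK N (n+1))
  e := fep (KK N 0)
  ex := fun n =>
    exact_subtype_comp₂ (fep (KK N (n+1))) ((LinearMap.ker (fep (KK N n))).subtype)
      (Submodule.injective_subtype _) (fep (KK N (n+2))) (fep_surj _)
  ex0 := exact_subtype_comp (fep (KK N 0)) (fep (KK N 1)) (fep_surj _)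
  surj := fep_surj (KK N 0)

end FreeRes

/-! ### Finsupp (direct sum) of a resolution -/

section Sum

lemma mapRange_exact {κ M N P : Type u} [AddCommGroup M] [Module R M] [AddCommGroup N]
    [Module R N] [AddCommGroup P] [Module R P]
    (f : M →ₗ[R] N) (g : N →ₗ[R] P) (h : Function.Exact f g) :
    Function.Exact (Finsupp.mapRange.linearMap (α := κ) f)
      (Finsupp.mapRange.linearMap (α := κ) g) := by
  classical
  intro x
  constructor
  · intro hx
    have hxa : ∀ a, g (x a) = 0 := by
      intro a
      have := DFunLike.congr_fun hx a
      simpa [Finsupp.mapRange.linearMap_apply, Finsupp.mapRange_apply] using this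
    refine ⟨Finsupp.onFinset x.support
      (fun a => if hz : x a = 0 then 0 else Classical.choose ((h (x a)).mp (hxa a))) ?_, ?_⟩
    · intro a ha
      by_contra hmem
      have : x a = 0 := Finsupp.notMem_support_iff.mp hmem
      simp [this] at ha
    · ext a
      rw [Finsupp.mapRange.linearMap_apply, Finsupp.mapRange_apply]
      simp only [Finsupp.onFinset_apply]
      by_cases hz : x a = 0
      · simp [hz]
      · rw [dif_neg hz]
        exact Classical.choose_spec ((h (x a)).mp (hxa a))
  · rintro ⟨y, rfl⟩
    ext a
    simp [Finsupp.mapRange.linearMap_apply, Finsupp.mapRange_apply, h.apply_apply_eq_zero]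

lemma mapRange_surj {κ M N : Type u} [AddCommGroup M] [Module R M] [AddCommGroup N] [Module R N]
    (f : M →ₗ[R] N) (hf : Function.Surjective f) :
    Function.Surjective (Finsupp.mapRange.linearMap (α := κ) f) := by
  classical
  intro x
  obtain ⟨y, hy⟩ := Finsupp.mapRange_surjective (f : M → N) (map_zero f) hf x
  exact ⟨y, by ext a; rw [Finsupp.mapRange.linearMap_apply]; exact DFunLike.congr_fun hy a⟩

noncomputable def sumRes {M : ModuleCat.{u} R} (q : CRes M) (κ : Type u) :
    CRes (ModuleCat.of R (κ →₀ (M : Type u))) where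
  Q := fun n => ModuleCat.of R (κ →₀ (q.Q n : Type u))
  proj := fun n => by
    classical
    haveI := q.proj n
    exact Module.Projective.of_equiv
      (finsuppLequivDFinsupp (M := (q.Q n : Type u)) (ι := κ) R).symm
  d := fun n => Finsupp.mapRange.linearMap (q.d n)
  e := Finsupp.mapRange.linearMap q.e
  ex := fun n => mapRange_exact _ _ (q.ex n)
  ex0 := mapRange_exact _ _ q.ex0
  surj := mapRange_surj _ q.surj

lemma finsuppRight_natural {Y M N : Type u} [AddCommGroup Y] [Module R Y] [AddCommGroup M]
    [Module R M] [AddCommGroup N] [Module R N] (κ : Type u) [DecidableEq κ] (f : M →ₗ[R] N)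
    (t : Y ⊗[R] (κ →₀ M)) :
    Finsupp.mapRange.linearMap (LinearMap.lTensor Y f) (TensorProduct.finsuppRight R R Y M κ t)
      = TensorProduct.finsuppRight R R Y N κ (LinearMap.lTensor Y (Finsupp.mapRange.linearMap f) t) := by
  classical
  have : (Finsupp.mapRange.linearMap (LinearMap.lTensor Y f)) ∘ₗ
      (TensorProduct.finsuppRight R R Y M κ).toLinearMap
      = (TensorProduct.finsuppRight R R Y N κ).toLinearMap ∘ₗ
        LinearMap.lTensor Y (Finsupp.mapRange.linearMap f) := by
    apply TensorProduct.ext'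
    intro y x
    induction x using Finsupp.induction_linear with
    | zero => simp
    | add u v hu hv =>
      have : y ⊗ₜ[R] (u + v) = y ⊗ₜ[R] u + y ⊗ₜ[R] v := TensorProduct.tmul_add y u v
      simp only [LinearMap.comp_apply, LinearEquiv.coe_coe] at hu hv ⊢
      rw [this, map_add, map_add, map_add, map_add, hu, hv]
    | single a m =>
      simp only [LinearMap.comp_apply, LinearEquiv.coe_coe]
      have h1 : TensorProduct.finsuppRight R R Y M κ (y ⊗ₜ[R] Finsupp.single a m)
          = Finsupp.single a (y ⊗ₜ[R] m) := by
        rw [TensorProduct.finsuppRight_apply_tmul]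
        simp
      have h2 : LinearMap.lTensor Y (Finsupp.mapRange.linearMap f) (y ⊗ₜ[R] Finsupp.single a m)
          = y ⊗ₜ[R] Finsupp.single a (f m) := by
        simp [Finsupp.mapRange_single]
      rw [h1, h2]
      rw [TensorProduct.finsuppRight_apply_tmul]
      simp
  exact DFunLike.congr_fun this t

lemma sumRes_nice (C : ModuleCat.{u} R) {M : ModuleCat.{u} R} (q : CRes M) (κ : Type u)
    (hq : q.IsNice C) : (sumRes q κ).IsNice C := by
  classical
  intro Y hY n
  have h := mapRange_exact (κ := κ) (LinearMap.lTensor Y (q.d (n+1))) (LinearMap.lTensor Y (q.d n))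
    (hq Y hY n)
  refine exact_equiv (TensorProduct.finsuppRight R R Y (q.Q (n+2) : Type u) κ).toEquiv
    (TensorProduct.finsuppRight R R Y (q.Q (n+1) : Type u) κ).toEquiv
    (TensorProduct.finsuppRight R R Y (q.Q n : Type u) κ).toEquiv
    _ _ _ _ (fun x => ?_) (fun x => ?_) (by simp) h
  · exact (finsuppRight_natural κ (q.d (n+1)) x).symm
  · exact (finsuppRight_natural κ (q.d n) x).symm

end Sum


/-! ### The mathlib resolution and the Tor bridge -/

section Bridge

noncomputable def PP (C : ModuleCat.{u} R) : ProjectiveResolution C :=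
  (HasProjectiveResolution.out (Z := C)).some

lemma exact_inj_post {A B C C' : Type u} [Zero C] [Zero C']
    (f : A → B) (g : B → C) (φ : C → C') (hφ : Function.Injective φ) (hφ0 : φ 0 = 0)
    (h : Function.Exact f g) : Function.Exact f (φ ∘ g) := by
  intro y
  rw [show (φ ∘ g) y = φ (g y) from rfl, show (0 : C') = φ 0 from hφ0.symm]
  rw [hφ.eq_iff]
  exact h y

lemma sc_exact_to_fun {S : ShortComplex (ModuleCat.{u} R)} (h : S.Exact) :
    Function.Exact S.f S.g := by
  intro y
  refine ⟨fun hy => (S.moduleCat_exact_iff).mp h y hy, ?_⟩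
  rintro ⟨x, rfl⟩
  exact congrFun (congrArg (fun (f : S.X₁ ⟶ S.X₃) => (f : S.X₁ → S.X₃)) S.zero) x

noncomputable def mres (C : ModuleCat.{u} R) : CRes C where
  Q := fun n => (PP C).complex.X n
  proj := fun n => (IsProjective.iff_projective _).mpr (by convert (PP C).projective n)
  d := fun n => ((PP C).complex.d (n+1) n).hom
  e := (HomologicalComplex.singleObjXSelf (ComplexShape.down ℕ) 0 C).hom.hom ∘ₗ ((PP C).π.f 0).hom
  ex := fun n => sc_exact_to_fun ((PP C).exact_succ n)
  ex0 := by
    have h : Function.Exact ((PP C).complex.d 1 0) ((PP C).π.f 0) :=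
      sc_exact_to_fun ((PP C).exact₀)
    have hinj : Function.Injective
        ((HomologicalComplex.singleObjXSelf (ComplexShape.down ℕ) 0 C).hom.hom :
          ((ChainComplex.single₀ (ModuleCat.{u} R)).obj C).X 0 →ₗ[R] C) := by
      rw [← ModuleCat.mono_iff_injective]
      infer_instance
    have h2 := exact_inj_post (⇑((PP C).complex.d 1 0)) (⇑((PP C).π.f 0))
      (⇑(HomologicalComplex.singleObjXSelf (ComplexShape.down ℕ) 0 C).hom) hinj
      (map_zero _) h
    exact h2
  surj := by
    have h1 : Function.Surjective ((PP C).π.f 0) := by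
      rw [← ModuleCat.epi_iff_surjective]
      infer_instance
    have h2 : Function.Surjective
        (HomologicalComplex.singleObjXSelf (ComplexShape.down ℕ) 0 C).hom := by
      rw [← ModuleCat.epi_iff_surjective]
      infer_instance
    exact h2.comp h1

lemma exact_lTensor_retract {Y Y' M1 M2 M3 : Type u} [AddCommGroup Y] [Module R Y]
    [AddCommGroup Y'] [Module R Y'] [AddCommGroup M1] [Module R M1] [AddCommGroup M2]
    [Module R M2] [AddCommGroup M3] [Module R M3]
    (s : Y →ₗ[R] Y') (p : Y' →ₗ[R] Y) (hps : p ∘ₗ s = LinearMap.id)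
    (f : M1 →ₗ[R] M2) (g : M2 →ₗ[R] M3) (hgf : g ∘ₗ f = 0)
    (h : Function.Exact (LinearMap.lTensor Y' f) (LinearMap.lTensor Y' g)) :
    Function.Exact (LinearMap.lTensor Y f) (LinearMap.lTensor Y g) := by
  have comm : ∀ {A B : Type u} [AddCommGroup A] [Module R A] [AddCommGroup B] [Module R B]
      (u : A →ₗ[R] B) (t : Y ⊗[R] A),
      LinearMap.lTensor Y' u (LinearMap.rTensor A s t)
        = LinearMap.rTensor B s (LinearMap.lTensor Y u t) := by
    intro A B _ _ _ _ u t
    rw [← LinearMap.comp_apply, ← LinearMap.comp_apply, LinearMap.lTensor_comp_rTensor,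
      LinearMap.rTensor_comp_lTensor]
  have retr : ∀ {A : Type u} [AddCommGroup A] [Module R A] (t : Y ⊗[R] A),
      LinearMap.rTensor A p (LinearMap.rTensor A s t) = t := by
    intro A _ _ t
    rw [← LinearMap.comp_apply, ← LinearMap.rTensor_comp, hps, LinearMap.rTensor_id,
      LinearMap.id_apply]
  intro z
  constructor
  · intro hz
    have h1 : LinearMap.lTensor Y' g (LinearMap.rTensor M2 s z) = 0 := by
      rw [comm, hz, map_zero]
    obtain ⟨w, hw⟩ := (h _).mp h1
    refine ⟨LinearMap.rTensor M1 p w, ?_⟩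
    have h2 : LinearMap.lTensor Y f (LinearMap.rTensor M1 p w)
        = LinearMap.rTensor M2 p (LinearMap.lTensor Y' f w) := by
      rw [← LinearMap.comp_apply, ← LinearMap.comp_apply, LinearMap.lTensor_comp_rTensor,
        LinearMap.rTensor_comp_lTensor]
    rw [h2, hw, retr]
  · rintro ⟨x, rfl⟩
    rw [← LinearMap.comp_apply, ← LinearMap.lTensor_comp, hgf, LinearMap.lTensor_zero]
    rfl

lemma mres_nice (C : ModuleCat.{u} R) (hC : TorProdOrthogonal C) : (mres C).IsNice C := by
  intro Y hY n
  obtain ⟨ι, s, p, hps⟩ := hY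
  set Y' : ModuleCat.{u} R := ModuleCat.of R (ι → CharacterModule C) with hY'
  have hex' : Function.Exact (LinearMap.lTensor Y' ((PP C).complex.d (n+2) (n+1)).hom)
      (LinearMap.lTensor Y' ((PP C).complex.d (n+1) n).hom) := by
    have hz : IsZero (((Tor (ModuleCat.{u} R) (n+1)).obj Y').obj C) :=
      hC ι (n+1) (Nat.succ_le_succ (Nat.zero_le n))
    set F := (tensoringLeft (ModuleCat.{u} R)).obj Y' with hF
    have hz2 : IsZero ((F.leftDerived (n+1)).obj C) := hz
    have iso := (PP C).isoLeftDerivedObj F (n+1)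
    have hz3 : IsZero ((HomologicalComplex.homologyFunctor (ModuleCat.{u} R) _ (n+1)).obj
        ((F.mapHomologicalComplex _).obj (PP C).complex)) := hz2.of_iso iso.symm
    set K := (F.mapHomologicalComplex _).obj (PP C).complex with hK
    have hexA : K.ExactAt (n+1) := (HomologicalComplex.exactAt_iff_isZero_homology _ _).mpr hz3
    rw [HomologicalComplex.exactAt_iff' K (n+2) (n+1) n (by simp) (by simp)] at hexA
    have h1 : (K.d (n+2) (n+1)).hom = LinearMap.lTensor Y' ((PP C).complex.d (n+2) (n+1)).hom := rfl
    have h2 : (K.d (n+1) n).hom = LinearMap.lTensor Y' ((PP C).complex.d (n+1) n).hom := rfl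
    intro y
    refine ⟨fun hy => ?_, ?_⟩
    · obtain ⟨x, hx⟩ := (ShortComplex.moduleCat_exact_iff _).mp hexA y (by
        rw [← h2] at hy; exact hy)
      exact ⟨x, by rw [← h1]; exact hx⟩
    · rintro ⟨x, rfl⟩
      have := congrFun (congrArg (fun (f : _ ⟶ _) => (f : _ → _)) (K.d_comp_d (n+2) (n+1) n)) x
      exact this
  exact exact_lTensor_retract s p hps _ _ ((mres C).d_comp_d n) hex'

lemma addClass_nice (C : ModuleCat.{u} R) (hC : TorProdOrthogonal C) (A : ModuleCat.{u} R)
    (hA : AddClass C A) : ∃ r : CRes A, r.IsNice C := by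
  obtain ⟨ι, s, p, hps⟩ := hA
  have hfC : (freeRes C).IsNice C :=
    nice_of_retract C (freeRes C) (mres C) (mres_nice C hC) LinearMap.id LinearMap.id
      (by simp)
  have hsum : (sumRes (freeRes C) ι).IsNice C := sumRes_nice C (freeRes C) ι hfC
  exact ⟨freeRes A, nice_of_retract C (freeRes A) (sumRes (freeRes C) ι) hsum s p hps⟩

end Bridge


/-! ### Mapping cone of a lift between resolutions -/

section Cone

variable {NA NK NK' : ModuleCat.{u} R}

lemma cone1 {Qq Qr : ℕ → ModuleCat.{u} R}
    (dq : ∀ n, (Qq (n+1) : Type u) →ₗ[R] Qq n) (eq : (Qq 0 : Type u) →ₗ[R] NA)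
    (dr : ∀ n, (Qr (n+1) : Type u) →ₗ[R] Qr n) (er : (Qr 0 : Type u) →ₗ[R] NK)
    (f : ∀ n, (Qr n : Type u) →ₗ[R] Qq n)
    (ι : (NK : Type u) →ₗ[R] NA) (π : (NA : Type u) →ₗ[R] NK')
    (hexq0 : Function.Exact (dq 0) eq)
    (hser : Function.Surjective er)
    (hιπ : Function.Exact ι π)
    (hf0 : eq ∘ₗ f 0 = ι ∘ₗ er) :
    Function.Exact (fun xy : (Qq 1 : Type u) × (Qr 0 : Type u) => dq 0 xy.1 + f 0 xy.2)
      (⇑π ∘ ⇑eq) := by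
  intro y
  constructor
  · intro hy
    obtain ⟨kk, hk⟩ := (hιπ (eq y)).mp hy
    obtain ⟨w, hw⟩ := hser kk
    have h1 : eq (y - f 0 w) = 0 := by
      have h2 := DFunLike.congr_fun hf0 w
      simp only [LinearMap.comp_apply] at h2
      rw [map_sub, h2, hw, hk, sub_self]
    obtain ⟨x, hx⟩ := (hexq0 _).mp h1
    refine ⟨(x, w), ?_⟩
    show dq 0 x + f 0 w = y
    rw [hx]
    abel
  · rintro ⟨⟨x, w⟩, rfl⟩
    show π (eq (dq 0 x + f 0 w)) = 0
    have e1 : eq (dq 0 x) = 0 := hexq0.apply_apply_eq_zero x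
    have e2 : eq (f 0 w) = ι (er w) := by
      have h2 := DFunLike.congr_fun hf0 w
      simpa only [LinearMap.comp_apply] using h2
    rw [map_add, e1, zero_add, e2]
    exact hιπ.apply_apply_eq_zero _

lemma cone2 {Qq Qr : ℕ → ModuleCat.{u} R}
    (dq : ∀ n, (Qq (n+1) : Type u) →ₗ[R] Qq n) (eq : (Qq 0 : Type u) →ₗ[R] NA)
    (dr : ∀ n, (Qr (n+1) : Type u) →ₗ[R] Qr n) (er : (Qr 0 : Type u) →ₗ[R] NK)
    (f : ∀ n, (Qr n : Type u) →ₗ[R] Qq n)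
    (ι : (NK : Type u) →ₗ[R] NA)
    (hexq : ∀ n, Function.Exact (dq (n+1)) (dq n))
    (hexq0 : Function.Exact (dq 0) eq)
    (hexr0 : Function.Exact (dr 0) er)
    (hι : Function.Injective ι)
    (hf0 : eq ∘ₗ f 0 = ι ∘ₗ er)
    (hf : ∀ n, dq n ∘ₗ f (n+1) = f n ∘ₗ dr n) :
    Function.Exact
      (fun xy : (Qq 2 : Type u) × (Qr 1 : Type u) =>
        ((dq 1 xy.1 + f 1 xy.2, - dr 0 xy.2) : (Qq 1 : Type u) × (Qr 0 : Type u)))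
      (fun xy : (Qq 1 : Type u) × (Qr 0 : Type u) => dq 0 xy.1 + f 0 xy.2) := by
  rintro ⟨x, y⟩
  constructor
  · intro hz
    have hz' : dq 0 x + f 0 y = 0 := hz
    have h1 : ι (er y) = 0 := by
      have h2 := DFunLike.congr_fun hf0 y
      simp only [LinearMap.comp_apply] at h2
      have h3 : eq (dq 0 x) = 0 := hexq0.apply_apply_eq_zero x
      have h4 := congrArg eq hz'
      rw [map_add, h3, zero_add, h2, map_zero] at h4
      exact h4
    have h4 : er y = 0 := hι (by rw [h1, map_zero])
    obtain ⟨y', hy'⟩ := (hexr0 y).mp h4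
    have h5 : dq 0 (x + f 1 y') = 0 := by
      rw [map_add]
      have h6 := DFunLike.congr_fun (hf 0) y'
      simp only [LinearMap.comp_apply] at h6
      rw [h6, hy']
      exact hz'
    obtain ⟨x', hx'⟩ := (hexq 0 _).mp h5
    refine ⟨(x', -y'), ?_⟩
    show ((dq 1 x' + f 1 (-y'), - dr 0 (-y')) : (Qq 1 : Type u) × (Qr 0 : Type u)) = (x, y)
    refine Prod.ext ?_ ?_
    · show dq 1 x' + f 1 (-y') = x
      rw [hx', map_neg]
      abel
    · show - dr 0 (-y') = y
      rw [map_neg, neg_neg, hy']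
  · rintro ⟨⟨x', y'⟩, hxy⟩
    have h1 : dq 1 x' + f 1 y' = x := congrArg Prod.fst hxy
    have h2 : - dr 0 y' = y := congrArg Prod.snd hxy
    show dq 0 x + f 0 y = 0
    rw [← h1, ← h2, map_add, map_neg]
    have h3 : dq 0 (dq 1 x') = 0 := (hexq 0).apply_apply_eq_zero x'
    have h4 : dq 0 (f 1 y') = f 0 (dr 0 y') := by
      have := DFunLike.congr_fun (hf 0) y'
      simpa only [LinearMap.comp_apply] using this
    rw [h3, h4]
    abel

lemma cone3 {Qq Qr : ℕ → ModuleCat.{u} R}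
    (dq : ∀ n, (Qq (n+1) : Type u) →ₗ[R] Qq n)
    (dr : ∀ n, (Qr (n+1) : Type u) →ₗ[R] Qr n)
    (f : ∀ n, (Qr n : Type u) →ₗ[R] Qq n)
    (hexq : ∀ n, Function.Exact (dq (n+1)) (dq n))
    (hexr : ∀ n, Function.Exact (dr (n+1)) (dr n))
    (hf : ∀ n, dq n ∘ₗ f (n+1) = f n ∘ₗ dr n) (n : ℕ) :
    Function.Exact
      (fun xy : (Qq (n+3) : Type u) × (Qr (n+2) : Type u) =>
        ((dq (n+2) xy.1 + f (n+2) xy.2, - dr (n+1) xy.2) :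
          (Qq (n+2) : Type u) × (Qr (n+1) : Type u)))
      (fun xy : (Qq (n+2) : Type u) × (Qr (n+1) : Type u) =>
        ((dq (n+1) xy.1 + f (n+1) xy.2, - dr n xy.2) :
          (Qq (n+1) : Type u) × (Qr n : Type u))) := by
  rintro ⟨x, y⟩
  constructor
  · intro hz
    have hz1 : dq (n+1) x + f (n+1) y = 0 := congrArg Prod.fst hz
    have hz2 : - dr n y = 0 := congrArg Prod.snd hz
    obtain ⟨y', hy'⟩ := (hexr n y).mp (neg_eq_zero.mp hz2)
    have h5 : dq (n+1) (x + f (n+2) y') = 0 := by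
      rw [map_add]
      have h6 := DFunLike.congr_fun (hf (n+1)) y'
      simp only [LinearMap.comp_apply] at h6
      rw [h6, hy']
      exact hz1
    obtain ⟨x', hx'⟩ := (hexq (n+1) _).mp h5
    refine ⟨(x', -y'), ?_⟩
    refine Prod.ext ?_ ?_
    · show dq (n+2) x' + f (n+2) (-y') = x
      rw [hx', map_neg]
      abel
    · show - dr (n+1) (-y') = y
      rw [map_neg, neg_neg, hy']
  · rintro ⟨⟨x', y'⟩, hxy⟩
    have h1 : dq (n+2) x' + f (n+2) y' = x := congrArg Prod.fst hxy
    have h2 : - dr (n+1) y' = y := congrArg Prod.snd hxy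
    refine Prod.ext ?_ ?_
    · show dq (n+1) x + f (n+1) y = 0
      rw [← h1, ← h2, map_add, map_neg]
      have h3 : dq (n+1) (dq (n+2) x') = 0 := (hexq (n+1)).apply_apply_eq_zero x'
      have h4 : dq (n+1) (f (n+2) y') = f (n+1) (dr (n+1) y') := by
        have := DFunLike.congr_fun (hf (n+1)) y'
        simpa only [LinearMap.comp_apply] using this
      rw [h3, h4]
      abel
    · show - dr n y = 0
      rw [← h2, map_neg, neg_neg, (hexr n).apply_apply_eq_zero y']

variable (q : CRes NA) (r : CRes NK)

noncomputable def coneQ : ℕ → ModuleCat.{u} R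
  | 0 => q.Q 0
  | (m+1) => ModuleCat.of R ((q.Q (m+1) : Type u) × (r.Q m : Type u))

noncomputable def coneD (f : ∀ n, (r.Q n : Type u) →ₗ[R] q.Q n) :
    ∀ m, (coneQ q r (m+1) : Type u) →ₗ[R] coneQ q r m
  | 0 => LinearMap.coprod (q.d 0) (f 0)
  | (m+1) => LinearMap.prod (LinearMap.coprod (q.d (m+1)) (f (m+1)))
      (- (r.d m ∘ₗ LinearMap.snd R (q.Q (m+2) : Type u) (r.Q (m+1) : Type u)))

lemma coneD_tensor0 (Y : ModuleCat.{u} R) (f : ∀ n, (r.Q n : Type u) →ₗ[R] q.Q n)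
    (t : Y ⊗[R] (coneQ q r 1 : Type u)) :
    LinearMap.lTensor Y (coneD q r f 0) t
      = LinearMap.coprod (LinearMap.lTensor Y (q.d 0)) (LinearMap.lTensor Y (f 0))
          (TensorProduct.prodRight R R Y ((q.Q 1 : Type u)) ((r.Q 0 : Type u)) t) := by
  have key : LinearMap.lTensor Y (coneD q r f 0)
      = LinearMap.coprod (LinearMap.lTensor Y (q.d 0)) (LinearMap.lTensor Y (f 0)) ∘ₗ
        (TensorProduct.prodRight R R Y ((q.Q 1 : Type u)) ((r.Q 0 : Type u))).toLinearMap := by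
    apply TensorProduct.ext'
    intro y x
    obtain ⟨a, b⟩ := x
    show LinearMap.lTensor Y (coneD q r f 0) (y ⊗ₜ[R] (a, b))
      = LinearMap.coprod (LinearMap.lTensor Y (q.d 0)) (LinearMap.lTensor Y (f 0))
          (TensorProduct.prodRight R R Y ((q.Q 1 : Type u)) ((r.Q 0 : Type u)) (y ⊗ₜ[R] (a, b)))
    rw [TensorProduct.prodRight_tmul, LinearMap.coprod_apply]
    show y ⊗ₜ[R] (coneD q r f 0 (a, b)) = _
    simp only [LinearMap.lTensor_tmul]
    rw [← TensorProduct.tmul_add]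
    rfl
  exact DFunLike.congr_fun key t

lemma coneD_tensor_succ (Y : ModuleCat.{u} R) (f : ∀ n, (r.Q n : Type u) →ₗ[R] q.Q n) (m : ℕ)
    (t : Y ⊗[R] (coneQ q r (m+2) : Type u)) :
    TensorProduct.prodRight R R Y ((q.Q (m+1) : Type u)) ((r.Q m : Type u))
        (LinearMap.lTensor Y (coneD q r f (m+1)) t)
      = LinearMap.prod
          (LinearMap.coprod (LinearMap.lTensor Y (q.d (m+1))) (LinearMap.lTensor Y (f (m+1))))
          (- (LinearMap.lTensor Y (r.d m) ∘ₗ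
            LinearMap.snd R (Y ⊗[R] (q.Q (m+2) : Type u)) (Y ⊗[R] (r.Q (m+1) : Type u))))
          (TensorProduct.prodRight R R Y ((q.Q (m+2) : Type u)) ((r.Q (m+1) : Type u)) t) := by
  have key : (TensorProduct.prodRight R R Y ((q.Q (m+1) : Type u)) ((r.Q m : Type u))).toLinearMap ∘ₗ
      LinearMap.lTensor Y (coneD q r f (m+1))
      = (LinearMap.prod
          (LinearMap.coprod (LinearMap.lTensor Y (q.d (m+1))) (LinearMap.lTensor Y (f (m+1))))
          (- (LinearMap.lTensor Y (r.d m) ∘ₗ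
            LinearMap.snd R (Y ⊗[R] (q.Q (m+2) : Type u)) (Y ⊗[R] (r.Q (m+1) : Type u))))) ∘ₗ
        (TensorProduct.prodRight R R Y ((q.Q (m+2) : Type u)) ((r.Q (m+1) : Type u))).toLinearMap := by
    apply TensorProduct.ext'
    intro y x
    obtain ⟨a, b⟩ := x
    show TensorProduct.prodRight R R Y ((q.Q (m+1) : Type u)) ((r.Q m : Type u))
        (LinearMap.lTensor Y (coneD q r f (m+1)) (y ⊗ₜ[R] (a, b)))
      = LinearMap.prod
          (LinearMap.coprod (LinearMap.lTensor Y (q.d (m+1))) (LinearMap.lTensor Y (f (m+1))))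
          (- (LinearMap.lTensor Y (r.d m) ∘ₗ
            LinearMap.snd R (Y ⊗[R] (q.Q (m+2) : Type u)) (Y ⊗[R] (r.Q (m+1) : Type u))))
          (TensorProduct.prodRight R R Y ((q.Q (m+2) : Type u)) ((r.Q (m+1) : Type u))
            (y ⊗ₜ[R] (a, b)))
    rw [TensorProduct.prodRight_tmul]
    show TensorProduct.prodRight R R Y ((q.Q (m+1) : Type u)) ((r.Q m : Type u))
        (y ⊗ₜ[R] ((q.d (m+1) a + f (m+1) b, - r.d m b) : (q.Q (m+1) : Type u) × (r.Q m : Type u)))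
      = _
    rw [TensorProduct.prodRight_tmul]
    refine Prod.ext ?_ ?_
    · show y ⊗ₜ[R] (q.d (m+1) a + f (m+1) b)
        = LinearMap.lTensor Y (q.d (m+1)) (y ⊗ₜ[R] a) + LinearMap.lTensor Y (f (m+1)) (y ⊗ₜ[R] b)
      rw [LinearMap.lTensor_tmul, LinearMap.lTensor_tmul, TensorProduct.tmul_add]
    · show y ⊗ₜ[R] (- r.d m b) = - (LinearMap.lTensor Y (r.d m) (y ⊗ₜ[R] b))
      rw [LinearMap.lTensor_tmul, TensorProduct.tmul_neg]
  exact DFunLike.congr_fun key t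

end Cone


/-! ### Key tensor facts about the kernels of a PGCF complex -/

section Key

lemma key_gen {Y A A' B B' : ModuleCat.{u} R}
    (σ : (B : Type u) →ₗ[R] A) (δ : (A : Type u) →ₗ[R] A') (τ : (B' : Type u) →ₗ[R] B)
    (hr : LinearMap.range σ = LinearMap.ker δ) (hστ : σ ∘ₗ τ = 0)
    (hbt : Function.Exact (LinearMap.lTensor Y τ) (LinearMap.lTensor Y σ))
    (hc : Function.Exact (LinearMap.lTensor Y σ) (LinearMap.lTensor Y δ)) :
    Function.Injective (LinearMap.lTensor Y (LinearMap.ker δ).subtype) ∧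
      LinearMap.range (LinearMap.lTensor Y (LinearMap.ker δ).subtype)
        = LinearMap.ker (LinearMap.lTensor Y δ) := by
  set πb : (B : Type u) →ₗ[R] LinearMap.ker δ :=
    LinearMap.codRestrict (LinearMap.ker δ) σ (fun x => hr ▸ LinearMap.mem_range_self σ x)
    with hπb
  have hfact : (LinearMap.ker δ).subtype ∘ₗ πb = σ :=
    LinearMap.subtype_comp_codRestrict σ (LinearMap.ker δ) _
  have hπsurj : Function.Surjective πb := by
    rintro ⟨a, ha⟩
    rw [← hr] at ha
    obtain ⟨b, hb⟩ := ha
    exact ⟨b, Subtype.ext hb⟩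
  have hTsurj : Function.Surjective (LinearMap.lTensor Y πb) :=
    LinearMap.lTensor_surjective _ hπsurj
  have hcomp : LinearMap.lTensor Y σ
      = LinearMap.lTensor Y ((LinearMap.ker δ).subtype) ∘ₗ LinearMap.lTensor Y πb := by
    rw [← LinearMap.lTensor_comp, hfact]
  constructor
  · rw [injective_iff_map_eq_zero]
    intro t ht
    obtain ⟨s, rfl⟩ := hTsurj t
    have h1 : LinearMap.lTensor Y σ s = 0 := by
      rw [hcomp, LinearMap.comp_apply, ht]
    obtain ⟨w, hw⟩ := (hbt s).mp h1
    have hπτ : πb ∘ₗ τ = 0 := by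
      apply LinearMap.ext
      intro x
      apply Subtype.ext
      show σ (τ x) = 0
      exact DFunLike.congr_fun hστ x
    rw [← hw, ← LinearMap.comp_apply, ← LinearMap.lTensor_comp, hπτ, LinearMap.lTensor_zero]
    rfl
  · apply le_antisymm
    · rintro t ⟨v, rfl⟩
      obtain ⟨s, rfl⟩ := hTsurj v
      rw [← LinearMap.comp_apply, ← hcomp]
      exact LinearMap.mem_ker.mpr (hc.apply_apply_eq_zero s)
    · intro t ht
      obtain ⟨s, hs⟩ := (hc t).mp (LinearMap.mem_ker.mp ht)
      rw [← hs, hcomp]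
      exact ⟨LinearMap.lTensor Y πb s, rfl⟩

variable {C : ModuleCat.{u} R} (X : PGCFComplex C)

lemma keyX (Y : ModuleCat.{u} R) (hY : ProdClass (charM C) Y) (n : ℕ) :
    Function.Injective (LinearMap.lTensor Y (LinearMap.ker (X.dA n)).subtype) ∧
      LinearMap.range (LinearMap.lTensor Y (LinearMap.ker (X.dA n)).subtype)
        = LinearMap.ker (LinearMap.lTensor Y (X.dA n)) := by
  obtain ⟨h1, h2, h3, h4⟩ := X.tensor_exact Y hY
  match n with
  | 0 =>
    refine key_gen X.mid (X.dA 0) (X.dP 0) ?_ ?_ h2 h3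
    · exact (LinearMap.exact_iff.mp X.exact_A0).symm
    · exact LinearMap.ext fun x => X.exact_mid.apply_apply_eq_zero x
  | 1 =>
    refine key_gen (X.dA 0) (X.dA 1) X.mid ?_ ?_ h3 (h4 0)
    · exact (LinearMap.exact_iff.mp (X.exact_A 0)).symm
    · exact LinearMap.ext fun x => X.exact_A0.apply_apply_eq_zero x
  | (k+2) =>
    refine key_gen (X.dA (k+1)) (X.dA (k+2)) (X.dA k) ?_ ?_ (h4 k) (h4 (k+1))
    · exact (LinearMap.exact_iff.mp (X.exact_A (k+1))).symm
    · exact LinearMap.ext fun x => (X.exact_A k).apply_apply_eq_zero x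

/-! ### The main induction -/

lemma main_res (hC : TorProdOrthogonal C) :
    ∀ n, ∃ r : CRes (ModuleCat.of R (LinearMap.ker (X.dA n))), r.IsNice C := by
  intro n
  induction n with
  | zero =>
    refine ⟨{
      Q := X.P
      proj := X.projP
      d := X.dP
      e := LinearMap.codRestrict (LinearMap.ker (X.dA 0)) X.mid
        (fun x => LinearMap.mem_ker.mpr ((X.exact_A0 (X.mid x)).mpr ⟨x, rfl⟩))
      ex := X.exact_P
      ex0 := by
        intro y
        constructor
        · intro hy
          have hy' : X.mid y = 0 := congrArg Subtype.val hy
          exact (X.exact_mid y).mp hy'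
        · rintro ⟨x, rfl⟩
          exact Subtype.ext (X.exact_mid.apply_apply_eq_zero x)
      surj := by
        rintro ⟨a, ha⟩
        obtain ⟨x, hx⟩ := (X.exact_A0 a).mp (LinearMap.mem_ker.mp ha)
        exact ⟨x, Subtype.ext hx⟩ }, ?_⟩
    intro Y hY
    exact (X.tensor_exact Y hY).1
  | succ k ih =>
    obtain ⟨rk, hrk⟩ := ih
    obtain ⟨q, hq⟩ := addClass_nice C hC (X.A k) (X.memA k)
    have hmem : ∀ x : (X.A k : Type u), X.dA (k+1) (X.dA k x) = 0 :=
      fun x => (X.exact_A k).apply_apply_eq_zero x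
    set ι : (ModuleCat.of R (LinearMap.ker (X.dA k)) : Type u) →ₗ[R] X.A k :=
      (LinearMap.ker (X.dA k)).subtype with hι
    set π : (X.A k : Type u) →ₗ[R] ModuleCat.of R (LinearMap.ker (X.dA (k+1))) :=
      LinearMap.codRestrict (LinearMap.ker (X.dA (k+1))) (X.dA k)
        (fun x => LinearMap.mem_ker.mpr (hmem x)) with hπ
    have hπsurj : Function.Surjective π := by
      rintro ⟨a, ha⟩
      obtain ⟨x, hx⟩ := (X.exact_A k a).mp (LinearMap.mem_ker.mp ha)
      exact ⟨x, Subtype.ext hx⟩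
    have hιinj : Function.Injective ι := Submodule.injective_subtype _
    have hιπ : Function.Exact ι π := by
      intro y
      constructor
      · intro hy
        have hy' : X.dA k y = 0 := congrArg Subtype.val hy
        exact ⟨⟨y, LinearMap.mem_ker.mpr hy'⟩, rfl⟩
      · rintro ⟨m, rfl⟩
        exact Subtype.ext (LinearMap.mem_ker.mp m.2)
    obtain ⟨f, hf0, hf⟩ := CRes.lift ι rk q
    refine ⟨{
      Q := coneQ q rk
      proj := fun m => by
        match m with
        | 0 => exact q.proj 0
        | (m+1) =>
          haveI := q.proj (m+1)
          haveI := rk.proj m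
          exact inferInstanceAs (Module.Projective R ((q.Q (m+1) : Type u) × (rk.Q m : Type u)))
      d := coneD q rk f
      e := π ∘ₗ q.e
      ex := fun m => by
        match m with
        | 0 => exact cone2 q.d q.e rk.d rk.e f ι q.ex q.ex0 rk.ex0 hιinj hf0 hf
        | (m+1) => exact cone3 q.d rk.d f q.ex rk.ex hf m
      ex0 := cone1 q.d q.e rk.d rk.e f ι π q.ex0 rk.surj hιπ hf0
      surj := hπsurj.comp q.surj }, ?_⟩
    intro Y hY m
    have hqY := hq Y hY
    have hrkY := hrk Y hY
    have hexq0Y : Function.Exact (LinearMap.lTensor Y (q.d 0)) (LinearMap.lTensor Y q.e) :=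
      lTensor_exact (Y : Type u) q.ex0 q.surj
    have hexr0Y : Function.Exact (LinearMap.lTensor Y (rk.d 0)) (LinearMap.lTensor Y rk.e) :=
      lTensor_exact (Y : Type u) rk.ex0 rk.surj
    have hιY : Function.Injective (LinearMap.lTensor Y ι) := (keyX X Y hY k).1
    have hf0Y : LinearMap.lTensor Y q.e ∘ₗ LinearMap.lTensor Y (f 0)
        = LinearMap.lTensor Y ι ∘ₗ LinearMap.lTensor Y rk.e := by
      rw [← LinearMap.lTensor_comp, ← LinearMap.lTensor_comp, hf0]
    have hfY : ∀ j, LinearMap.lTensor Y (q.d j) ∘ₗ LinearMap.lTensor Y (f (j+1))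
        = LinearMap.lTensor Y (f j) ∘ₗ LinearMap.lTensor Y (rk.d j) := by
      intro j
      rw [← LinearMap.lTensor_comp, ← LinearMap.lTensor_comp, hf j]
    match m with
    | 0 =>
      have h := cone2 (NA := ModuleCat.of R (Y ⊗[R] (X.A k : Type u)))
        (NK := ModuleCat.of R (Y ⊗[R] (ModuleCat.of R (LinearMap.ker (X.dA k)) : Type u)))
        (Qq := fun j => ModuleCat.of R (Y ⊗[R] (q.Q j : Type u)))
        (Qr := fun j => ModuleCat.of R (Y ⊗[R] (rk.Q j : Type u)))
        (fun j => LinearMap.lTensor Y (q.d j)) (LinearMap.lTensor Y q.e)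
        (fun j => LinearMap.lTensor Y (rk.d j)) (LinearMap.lTensor Y rk.e)
        (fun j => LinearMap.lTensor Y (f j)) (LinearMap.lTensor Y ι)
        hqY hexq0Y hexr0Y hιY hf0Y hfY
      refine exact_equiv
        (TensorProduct.prodRight R R Y ((q.Q 2 : Type u)) ((rk.Q 1 : Type u))).toEquiv
        (TensorProduct.prodRight R R Y ((q.Q 1 : Type u)) ((rk.Q 0 : Type u))).toEquiv
        (Equiv.refl _) _ _ _ _ (fun x => ?_) (fun x => ?_) (by simp; rfl) h
      · exact coneD_tensor_succ q rk Y f 0 x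
      · exact coneD_tensor0 q rk Y f x
    | (m+1) =>
      have h := cone3
        (Qq := fun j => ModuleCat.of R (Y ⊗[R] (q.Q j : Type u)))
        (Qr := fun j => ModuleCat.of R (Y ⊗[R] (rk.Q j : Type u)))
        (fun j => LinearMap.lTensor Y (q.d j))
        (fun j => LinearMap.lTensor Y (rk.d j))
        (fun j => LinearMap.lTensor Y (f j))
        hqY hrkY hfY m
      refine exact_equiv
        (TensorProduct.prodRight R R Y ((q.Q (m+3) : Type u)) ((rk.Q (m+2) : Type u))).toEquiv
        (TensorProduct.prodRight R R Y ((q.Q (m+2) : Type u)) ((rk.Q (m+1) : Type u))).toEquiv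
        (TensorProduct.prodRight R R Y ((q.Q (m+1) : Type u)) ((rk.Q m : Type u))).toEquiv
        _ _ _ _ (fun x => ?_) (fun x => ?_) (by simp) h
      · exact coneD_tensor_succ q rk Y f (m+1) x
      · exact coneD_tensor_succ q rk Y f m x

end Key

end S10

/-- If `C` is Tor-∏-orthogonal, then every kernel in the right half of a
totally acyclic complex as in the definition of `PG_CF` modules is itself a `PG_CF` module. -/
theorem statement10 (C : ModuleCat.{u} R) (hC : TorProdOrthogonal C)
    (X : PGCFComplex C) (n : ℕ) :
    IsPGCF C (ModuleCat.of R (LinearMap.ker (X.dA n))) := by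
  obtain ⟨r, hr⟩ := S10.main_res X hC n
  have hrange : LinearMap.range ((LinearMap.ker (X.dA n)).subtype ∘ₗ r.e)
      = LinearMap.ker (X.dA n) := by
    rw [LinearMap.range_comp, LinearMap.range_eq_top.mpr r.surj, Submodule.map_top]
    exact Submodule.range_subtype _
  have hmidd : ((LinearMap.ker (X.dA n)).subtype ∘ₗ r.e) ∘ₗ r.d 0 = 0 := by
    rw [LinearMap.comp_assoc, r.e_comp_d, LinearMap.comp_zero]
  refine ⟨{
    P := r.Q
    A := fun m => X.A (n + m)
    projP := r.proj
    memA := fun m => X.memA (n + m)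
    dP := r.d
    mid := (LinearMap.ker (X.dA n)).subtype ∘ₗ r.e
    dA := fun m => X.dA (n + m)
    exact_P := r.ex
    exact_mid := by
      intro y
      constructor
      · intro hy
        have h1 : r.e y = 0 := Submodule.injective_subtype _ (by
          show (LinearMap.ker (X.dA n)).subtype (r.e y)
            = (LinearMap.ker (X.dA n)).subtype 0
          rw [map_zero]
          exact hy)
        exact (r.ex0 y).mp h1
      · rintro ⟨x, rfl⟩
        show (LinearMap.ker (X.dA n)).subtype (r.e (r.d 0 x)) = 0
        rw [r.ex0.apply_apply_eq_zero x, map_zero]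
    exact_A0 := by
      intro a
      constructor
      · intro ha
        obtain ⟨u, hu⟩ := r.surj (⟨a, LinearMap.mem_ker.mpr ha⟩ : LinearMap.ker (X.dA n))
        refine ⟨u, ?_⟩
        show (LinearMap.ker (X.dA n)).subtype (r.e u) = a
        rw [hu]
        rfl
      · rintro ⟨y, rfl⟩
        exact LinearMap.mem_ker.mp (r.e y).2
    exact_A := fun m => X.exact_A (n + m)
    tensor_exact := fun Y hY => by
      obtain ⟨hinj, hker⟩ := S10.keyX X Y hY n
      refine ⟨hr Y hY, ?_, ?_, fun m => (X.tensor_exact Y hY).2.2.2 (n + m)⟩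
      · have hbase : Function.Exact (LinearMap.lTensor Y (r.d 0)) (LinearMap.lTensor Y r.e) :=
          lTensor_exact (Y : Type u) r.ex0 r.surj
        intro t
        constructor
        · intro ht
          have h2 : LinearMap.lTensor Y r.e t = 0 := by
            apply hinj
            rw [map_zero]
            have e1 : LinearMap.lTensor Y (LinearMap.ker (X.dA n)).subtype
                (LinearMap.lTensor Y r.e t)
                = LinearMap.lTensor Y ((LinearMap.ker (X.dA n)).subtype ∘ₗ r.e) t := by
              rw [LinearMap.lTensor_comp]
              rfl
            rw [e1]
            exact ht
          exact (hbase t).mp h2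
        · rintro ⟨x, rfl⟩
          rw [← LinearMap.comp_apply, ← LinearMap.lTensor_comp, hmidd, LinearMap.lTensor_zero]
          rfl
      · intro t
        constructor
        · intro ht
          have h1 : t ∈ LinearMap.range
              (LinearMap.lTensor Y (LinearMap.ker (X.dA n)).subtype) :=
            hker ▸ LinearMap.mem_ker.mpr ht
          obtain ⟨s, hs⟩ := h1
          obtain ⟨u, hu⟩ := LinearMap.lTensor_surjective (Y : Type u) r.surj s
          refine ⟨u, ?_⟩
          have step : LinearMap.lTensor Y ((LinearMap.ker (X.dA n)).subtype ∘ₗ r.e) u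
              = LinearMap.lTensor Y (LinearMap.ker (X.dA n)).subtype
                  (LinearMap.lTensor Y r.e u) := by
            rw [LinearMap.lTensor_comp]; rfl
          show LinearMap.lTensor (Y : Type u) ((LinearMap.ker (X.dA n)).subtype ∘ₗ r.e) u = t
          rw [step, hu]
          exact hs
        · rintro ⟨x, rfl⟩
          have h1 : LinearMap.lTensor Y ((LinearMap.ker (X.dA n)).subtype ∘ₗ r.e) x
              ∈ LinearMap.range (LinearMap.lTensor Y (LinearMap.ker (X.dA n)).subtype) := by
            have step : LinearMap.lTensor Y ((LinearMap.ker (X.dA n)).subtype ∘ₗ r.e) x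
                = LinearMap.lTensor Y (LinearMap.ker (X.dA n)).subtype
                    (LinearMap.lTensor Y r.e x) := by
              rw [LinearMap.lTensor_comp]; rfl
            rw [step]
            exact ⟨LinearMap.lTensor Y r.e x, rfl⟩
          exact LinearMap.mem_ker.mp (hker ▸ h1)
  }, ⟨LinearEquiv.ofEq _ _ hrange.symm⟩⟩
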